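/- arXiv:1305.2142 — 2 statements merged into one kernel-verified Lean document; each statement's English description precedes it below -/
import Mathlib

section
/- Let n ≥ 1 and let C = (C_i^j(d)) be any collection of elements of ℚ_α indexed by integers d ≥ 1 and ordered pairs i ≠ j in {1,…,n}. If F ∈ H_α⟪ħ⟫[[q]] is C-recursive, then: (a) for every i, F(α_i,ħ,q) ∈ ℚ_α(ħ)[[q]], i.e., every q-coefficient of F(α_i,ħ,q) is (the Laurent expansion of) a rational function of ħ; (b) for every d ≥ 1, every d′ ≥ 0 and all i ≠ j, the coefficient of q^{d′} in F(α_i,ħ,q) is regular at ħ = (α_i−α_j)/d; and (c) there exist integers N_d ≥ 0 and elements F_i^r(d) ∈ ℚ_α such that for every i, F(α_i,ħ,q) = ∑_{d≥0} ∑_{r=−N_d}^{N_d} F_i^r(d)·ħ^r·q^d + ∑_{d≥1} ∑_{j≠i} [C_i^j(d)·q^d/(ħ − (α_j−α_i)/d)]·F(α_j,(α_j−α_i)/d,q), where F(α_j,(α_j−α_i)/d,q) ∈ ℚ_α[[q]] is obtained by evaluating each q-coefficient of F(α_j,ħ,q) at ħ = (α_j−α_i)/d. -/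
/-!
Setting: `Kf n = ℚ(α₁,…,αₙ)` is the field of rational functions in `n` variables over `ℚ`,
`Lf n = ℚ_α⟪ħ⟫` is the algebra of Laurent series in `ħ⁻¹` (modeled as Laurent series in the
variable `t = ħ⁻¹`, so that the coefficient of `ħ^r` is the Hahn-series coefficient at `-r`).
An element `F ∈ H_α⟪ħ⟫[[q]]` is modeled by its `n` evaluations `F : Fin n → PowerSeries (Lf n)`
(by the Chinese remainder theorem, `H_α ≅ ∏ᵢ ℚ_α` via `x ↦ (αᵢ)ᵢ`, so this is faithful).
-/

open scoped Classical

noncomputable section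

namespace SQ

/-- The field `ℚ_α = ℚ(α₁,…,αₙ)`. -/
abbrev Kf (n : ℕ) : Type := FractionRing (MvPolynomial (Fin n) ℚ)

/-- The element `αᵢ ∈ ℚ_α`. -/
def alpha (n : ℕ) (i : Fin n) : Kf n :=
  algebraMap (MvPolynomial (Fin n) ℚ) (Kf n) (MvPolynomial.X i)

/-- `ℚ_α⟪ħ⟫`: Laurent series in `t = ħ⁻¹`. -/
abbrev Lf (n : ℕ) : Type := LaurentSeries (Kf n)

/-- `ħ = t⁻¹` where `t` is the Laurent-series variable. -/
def hbar (n : ℕ) : Lf n := HahnSeries.single (-1 : ℤ) 1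

/-- The substitution `ħ ↦ −ħ` on `ℚ_α⟪ħ⟫`. -/
def negH (n : ℕ) (x : Lf n) : Lf n :=
  ⟨fun a => (-1 : Kf n) ^ a * x.coeff a,
    x.isPWO_support'.mono fun a ha => by
      simp only [Function.mem_support] at ha ⊢
      exact fun h => ha (by rw [h, mul_zero])⟩

/-- `x ∈ ℚ_α⟪ħ⟫` lies in (the image of) `ℚ_α(ħ)`, i.e. `Q(ħ)·x = P(ħ)` for some polynomials
`P, Q` with `Q ≠ 0`. -/
def IsRatH (n : ℕ) (x : Lf n) : Prop :=
  ∃ P Q : Polynomial (Kf n), Q ≠ 0 ∧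
    Polynomial.aeval (hbar n) Q * x = Polynomial.aeval (hbar n) P

/-- `x ∈ ℚ_α⟪ħ⟫` is a rational function of `ħ`, regular at `ħ = c`, with value `v` there. -/
def RegEvalAt (n : ℕ) (x : Lf n) (c v : Kf n) : Prop :=
  ∃ P Q : Polynomial (Kf n), Polynomial.eval c Q ≠ 0 ∧
    Polynomial.aeval (hbar n) Q * x = Polynomial.aeval (hbar n) P ∧
    v = Polynomial.eval c P / Polynomial.eval c Q

/-- `x` is a rational function of `ħ` regular at `ħ = c`. -/
def RegAt (n : ℕ) (x : Lf n) (c : Kf n) : Prop := ∃ v : Kf n, RegEvalAt n x c v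

/-- `x` is a Laurent polynomial in `ħ`, i.e. an element of `ℚ_α[ħ,ħ⁻¹]`. -/
def IsLaurentPolyH (n : ℕ) (x : Lf n) : Prop := x.support.Finite

/-- `x` is a polynomial in `ħ`, i.e. an element of `ℚ_α[ħ]`. -/
def IsPolyH (n : ℕ) (x : Lf n) : Prop :=
  ∃ P : Polynomial (Kf n), x = Polynomial.aeval (hbar n) P

/-- Definition 5.1 (`C`-recursivity).  `C d i j` is the structure constant `C_i^j(d)`
(only the values with `d ≥ 1` and `j ≠ i` are used). -/
def CRecursive (n : ℕ) (C : ℕ → Fin n → Fin n → Kf n)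
    (F : Fin n → PowerSeries (Lf n)) : Prop :=
  ∀ dstar : ℕ,
    (∀ d : ℕ, 1 ≤ d → d ≤ dstar → ∀ i : Fin n,
        IsRatH n (PowerSeries.coeff (dstar - d) (F i))) →
    (∀ d : ℕ, 1 ≤ d → d < dstar → ∀ i j : Fin n, i ≠ j →
        RegAt n (PowerSeries.coeff d (F i))
          ((alpha n i - alpha n j) / (d : Kf n))) →
    ∀ i : Fin n, ∃ v : ℕ → Fin n → Kf n,
      (∀ d : ℕ, ∀ j : Fin n, 1 ≤ d → d ≤ dstar → j ≠ i →
          RegEvalAt n (PowerSeries.coeff (dstar - d) (F j))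
            ((alpha n j - alpha n i) / (d : Kf n)) (v d j)) ∧
      IsLaurentPolyH n
        (PowerSeries.coeff dstar (F i)
          - ∑ d ∈ Finset.Icc 1 dstar, ∑ j ∈ Finset.univ.erase i,
              algebraMap (Kf n) (Lf n) (C d i j)
                * (hbar n
                    - algebraMap (Kf n) (Lf n)
                        ((alpha n j - alpha n i) / (d : Kf n)))⁻¹
                * algebraMap (Kf n) (Lf n) (v d j))

/-- The coefficient of `z^a q^D` in
`Φ^η_{F,F′}(ħ,z,q) = ∑ᵢ (η(αᵢ) e^{αᵢ z} / ∏_{k≠i}(αᵢ−α_k)) F(αᵢ,ħ,q e^{ħz}) F′(αᵢ,−ħ,q)`.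
(Only the values `η(αᵢ)` of the rational function `η` enter the definition, so `η` is
represented by its tuple of values `eta : Fin n → Kf n`.) -/
def PhiCoeff (n : ℕ) (eta : Fin n → Kf n) (F F' : Fin n → PowerSeries (Lf n))
    (a D : ℕ) : Lf n :=
  ∑ i : Fin n, ∑ d ∈ Finset.range (D + 1), ∑ m ∈ Finset.range (a + 1),
    algebraMap (Kf n) (Lf n)
        (eta i / (∏ k ∈ Finset.univ.erase i, (alpha n i - alpha n k))
          * (alpha n i ^ m / (Nat.factorial m : Kf n))
          * ((d : Kf n) ^ (a - m) / (Nat.factorial (a - m) : Kf n)))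
      * hbar n ^ (a - m)
      * PowerSeries.coeff d (F i)
      * negH n (PowerSeries.coeff (D - d) (F' i))

/-- The η mutual polynomiality condition: every coefficient of `z^a q^D` of `Φ^η_{F,F′}`
is a polynomial in `ħ`. -/
def MPC (n : ℕ) (eta : Fin n → Kf n) (F F' : Fin n → PowerSeries (Lf n)) : Prop :=
  ∀ a D : ℕ, IsPolyH n (PhiCoeff n eta F F' a D)

variable {n : ℕ}

lemma isRatH_zero : IsRatH n 0 := ⟨0, 1, one_ne_zero, by simp⟩

lemma isRatH_add {x y : Lf n} (hx : IsRatH n x) (hy : IsRatH n y) : IsRatH n (x + y) := by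
  obtain ⟨P₁, Q₁, hQ₁, h₁⟩ := hx
  obtain ⟨P₂, Q₂, hQ₂, h₂⟩ := hy
  refine ⟨Q₂ * P₁ + Q₁ * P₂, Q₁ * Q₂, mul_ne_zero hQ₁ hQ₂, ?_⟩
  simp only [map_mul, map_add]
  linear_combination (Polynomial.aeval (hbar n) Q₂) * h₁ + (Polynomial.aeval (hbar n) Q₁) * h₂

lemma isRatH_sum {α : Type*} (s : Finset α) (f : α → Lf n)
    (h : ∀ x ∈ s, IsRatH n (f x)) : IsRatH n (∑ x ∈ s, f x) := by
  classical
  induction s using Finset.induction_on with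
  | empty => simpa using isRatH_zero
  | insert a s hx ih =>
    rw [Finset.sum_insert hx]
    exact isRatH_add (h _ (Finset.mem_insert_self _ _))
      (ih fun x hxs => h x (Finset.mem_insert_of_mem hxs))

lemma regEvalAt_add {x y : Lf n} {c vx vy : Kf n} (hx : RegEvalAt n x c vx)
    (hy : RegEvalAt n y c vy) : RegEvalAt n (x + y) c (vx + vy) := by
  obtain ⟨P₁, Q₁, hQ₁, h₁, hv₁⟩ := hx
  obtain ⟨P₂, Q₂, hQ₂, h₂, hv₂⟩ := hy
  refine ⟨Q₂ * P₁ + Q₁ * P₂, Q₁ * Q₂, by simp [Polynomial.eval_mul]; exact ⟨hQ₁, hQ₂⟩, ?_, ?_⟩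
  · simp only [map_mul, map_add]
    linear_combination (Polynomial.aeval (hbar n) Q₂) * h₁ + (Polynomial.aeval (hbar n) Q₁) * h₂
  · simp only [Polynomial.eval_add, Polynomial.eval_mul, hv₁, hv₂]
    field_simp

lemma regAt_add {x y : Lf n} {c : Kf n} (hx : RegAt n x c) (hy : RegAt n y c) :
    RegAt n (x + y) c := by
  obtain ⟨vx, hx⟩ := hx; obtain ⟨vy, hy⟩ := hy
  exact ⟨vx + vy, regEvalAt_add hx hy⟩

lemma regAt_zero {c : Kf n} : RegAt n 0 c := ⟨0, 0, 1, by simp, by simp, by simp⟩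

lemma regAt_sum {α : Type*} (s : Finset α) (f : α → Lf n) {c : Kf n}
    (h : ∀ x ∈ s, RegAt n (f x) c) : RegAt n (∑ x ∈ s, f x) c := by
  classical
  induction s using Finset.induction_on with
  | empty => simpa using regAt_zero
  | insert a s hx ih =>
    rw [Finset.sum_insert hx]
    exact regAt_add (h _ (Finset.mem_insert_self _ _))
      (ih fun x hxs => h x (Finset.mem_insert_of_mem hxs))

lemma alg_apply (c : Kf n) : algebraMap (Kf n) (Lf n) c = HahnSeries.single (0:ℤ) c := by
  rw [HahnSeries.algebraMap_apply', PowerSeries.algebraMap_apply, Algebra.algebraMap_self,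
    RingHom.id_apply, HahnSeries.ofPowerSeries_C, HahnSeries.C_apply]

lemma hbar_sub_alg_ne (c : Kf n) : hbar n - algebraMap (Kf n) (Lf n) c ≠ 0 := by
  intro h
  have := congrArg (fun x => HahnSeries.coeff x (-1)) h
  simp only [HahnSeries.coeff_sub, alg_apply, hbar] at this
  rw [HahnSeries.coeff_single_same, HahnSeries.coeff_single_of_ne (by norm_num)] at this
  norm_num at this

lemma aeval_X_sub_C (c : Kf n) :
    Polynomial.aeval (hbar n) (Polynomial.X - Polynomial.C c)
      = hbar n - algebraMap (Kf n) (Lf n) c := by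
  simp [Polynomial.aeval_C]

/-- The basic recursion term. -/
lemma regEvalAt_term (A w c c' : Kf n) (hcc : c' ≠ c) :
    RegEvalAt n (algebraMap (Kf n) (Lf n) A
        * (hbar n - algebraMap (Kf n) (Lf n) c)⁻¹ * algebraMap (Kf n) (Lf n) w)
      c' (A * w / (c' - c)) := by
  refine ⟨Polynomial.C (A * w), Polynomial.X - Polynomial.C c, by simpa using sub_ne_zero.2 hcc,
    ?_, by simp⟩
  rw [aeval_X_sub_C, Polynomial.aeval_C]
  have hu : hbar n - algebraMap (Kf n) (Lf n) c ≠ 0 := hbar_sub_alg_ne c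
  field_simp
  exact (map_mul _ _ _).symm

lemma isRatH_term (A w c : Kf n) :
    IsRatH n (algebraMap (Kf n) (Lf n) A
        * (hbar n - algebraMap (Kf n) (Lf n) c)⁻¹ * algebraMap (Kf n) (Lf n) w) := by
  refine ⟨Polynomial.C (A * w), Polynomial.X - Polynomial.C c, Polynomial.X_sub_C_ne_zero c, ?_⟩
  rw [aeval_X_sub_C, Polynomial.aeval_C]
  have hu : hbar n - algebraMap (Kf n) (Lf n) c ≠ 0 := hbar_sub_alg_ne c
  field_simp
  exact (map_mul _ _ _).symm

lemma hbar_pow (k : ℕ) : hbar n ^ k = HahnSeries.single (-(k:ℤ)) 1 := by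
  simp [hbar, HahnSeries.single_pow]

lemma single_zero_eq_one : (HahnSeries.single (0:ℤ) (1 : Kf n)) = 1 := rfl

lemma hbar_zpow (r : ℤ) : hbar n ^ r = HahnSeries.single (-r) 1 := by
  rcases r with k | k
  · rw [Int.ofNat_eq_natCast, zpow_natCast, hbar_pow]
  · rw [Int.negSucc_eq, zpow_neg, neg_neg, ← Nat.cast_add_one, zpow_natCast, hbar_pow,
      inv_eq_of_mul_eq_one_left]
    rw [HahnSeries.single_mul_single, one_mul, add_neg_cancel, single_zero_eq_one]

lemma alg_mul_hbar_zpow (c : Kf n) (r : ℤ) :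
    algebraMap (Kf n) (Lf n) c * hbar n ^ r = HahnSeries.single (-r) c := by
  rw [alg_apply, hbar_zpow, HahnSeries.single_mul_single, zero_add, mul_one]

lemma coeff_sum {α : Type*} (s : Finset α) (f : α → Lf n) (a : ℤ) :
    (∑ x ∈ s, f x).coeff a = ∑ x ∈ s, (f x).coeff a :=
  map_sum (HahnSeries.coeff.addMonoidHom a) f s

/-- Representation of a Laurent polynomial with support in `[-N,N]`. -/
lemma eq_sum_single (x : Lf n) (N : ℕ) (h : x.support ⊆ Set.Icc (-(N:ℤ)) (N:ℤ)) :
    x = ∑ r ∈ Finset.Icc (-(N:ℤ)) (N:ℤ),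
      algebraMap (Kf n) (Lf n) (x.coeff (-r)) * hbar n ^ r := by
  ext a
  rw [coeff_sum]
  have h1 : ∀ r ∈ Finset.Icc (-(N:ℤ)) (N:ℤ),
      (algebraMap (Kf n) (Lf n) (x.coeff (-r)) * hbar n ^ r).coeff a
        = if r = -a then x.coeff a else 0 := by
    intro r _
    rw [alg_mul_hbar_zpow, HahnSeries.coeff_single]
    by_cases hr : r = -a
    · simp [hr]
    · rw [if_neg (by omega), if_neg hr]
  rw [Finset.sum_congr rfl h1, Finset.sum_ite_eq' _ (-a) (fun _ => x.coeff a)]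
  by_cases ha : -a ∈ Finset.Icc (-(N:ℤ)) (N:ℤ)
  · rw [if_pos ha]
  · rw [if_neg ha]
    by_contra hne
    have : a ∈ x.support := by simpa [HahnSeries.mem_support] using hne
    have := h this
    simp only [Set.mem_Icc] at this
    exact ha (Finset.mem_Icc.2 (by omega))

lemma isRatH_single (a : ℤ) (r : Kf n) : IsRatH n (HahnSeries.single a r) := by
  refine ⟨Polynomial.C r * Polynomial.X ^ (max a 0 - a).toNat, Polynomial.X ^ (max a 0).toNat,
    pow_ne_zero _ Polynomial.X_ne_zero, ?_⟩
  rw [map_pow, Polynomial.aeval_X, map_mul, map_pow, Polynomial.aeval_X, Polynomial.aeval_C,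
    hbar_pow, hbar_pow, alg_apply, HahnSeries.single_mul_single, HahnSeries.single_mul_single,
    one_mul, mul_one, zero_add]
  have he : (-(((max a 0).toNat : ℤ)) + a) = -(((max a 0 - a).toNat : ℤ)) := by omega
  rw [he]

lemma regAt_single (a : ℤ) (r : Kf n) {c : Kf n} (hc : c ≠ 0) :
    RegAt n (HahnSeries.single a r) c := by
  refine ⟨_, Polynomial.C r * Polynomial.X ^ (max a 0 - a).toNat, Polynomial.X ^ (max a 0).toNat,
    by rw [Polynomial.eval_pow, Polynomial.eval_X]; exact pow_ne_zero _ hc, ?_, rfl⟩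
  rw [map_pow, Polynomial.aeval_X, map_mul, map_pow, Polynomial.aeval_X, Polynomial.aeval_C,
    hbar_pow, hbar_pow, alg_apply, HahnSeries.single_mul_single, HahnSeries.single_mul_single,
    one_mul, mul_one, zero_add]
  have he : (-(((max a 0).toNat : ℤ)) + a) = -(((max a 0 - a).toNat : ℤ)) := by omega
  rw [he]

lemma laurent_bound (x : Lf n) (h : x.support.Finite) :
    ∃ N : ℕ, x.support ⊆ Set.Icc (-(N:ℤ)) (N:ℤ) := by
  refine ⟨h.toFinset.sup (fun a => a.natAbs), fun a ha => ?_⟩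
  have : a.natAbs ≤ h.toFinset.sup (fun a => a.natAbs) :=
    Finset.le_sup (by simpa using ha)
  simp only [Set.mem_Icc]
  omega

lemma isRatH_of_laurent {x : Lf n} (h : x.support.Finite) : IsRatH n x := by
  obtain ⟨N, hN⟩ := laurent_bound x h
  rw [eq_sum_single x N hN]
  refine isRatH_sum _ _ fun r _ => ?_
  rw [alg_mul_hbar_zpow]
  exact isRatH_single _ _

lemma regAt_of_laurent {x : Lf n} (h : x.support.Finite) {c : Kf n} (hc : c ≠ 0) :
    RegAt n x c := by
  obtain ⟨N, hN⟩ := laurent_bound x h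
  rw [eq_sum_single x N hN]
  refine regAt_sum _ _ fun r _ => ?_
  rw [alg_mul_hbar_zpow]
  exact regAt_single _ _ hc

lemma aeval_hbar_coeff (P : Polynomial (Kf n)) (k : ℕ) :
    (Polynomial.aeval (hbar n) P).coeff (-(k:ℤ)) = P.coeff k := by
  have hd : P.natDegree < max (P.natDegree + 1) (k + 1) :=
    lt_of_lt_of_le (lt_add_one _) (le_max_left _ _)
  rw [Polynomial.aeval_eq_sum_range' hd]
  simp only [Algebra.smul_def]
  rw [coeff_sum]
  have h1 : ∀ i ∈ Finset.range (max (P.natDegree + 1) (k + 1)),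
      (algebraMap (Kf n) (Lf n) (P.coeff i) * hbar n ^ i).coeff (-(k:ℤ)) =
        if i = k then P.coeff i else 0 := by
    intro i _
    rw [alg_apply, hbar_pow, HahnSeries.single_mul_single, zero_add, mul_one,
      HahnSeries.coeff_single]
    simp only [neg_inj, Nat.cast_inj]
    exact if_congr eq_comm rfl rfl
  exact (Finset.sum_congr rfl h1).trans (by
    rw [Finset.sum_ite_eq' _ k P.coeff,
      if_pos (Finset.mem_range.2 (lt_of_lt_of_le (lt_add_one _) (le_max_right _ _)))])

lemma aeval_hbar_injective {P Q : Polynomial (Kf n)}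
    (h : Polynomial.aeval (hbar n) P = Polynomial.aeval (hbar n) Q) : P = Q := by
  ext k
  rw [← aeval_hbar_coeff P k, ← aeval_hbar_coeff Q k, h]


lemma regEvalAt_unique {x : Lf n} {c v₁ v₂ : Kf n}
    (h₁ : RegEvalAt n x c v₁) (h₂ : RegEvalAt n x c v₂) : v₁ = v₂ := by
  obtain ⟨P₁, Q₁, hQ₁, he₁, hv₁⟩ := h₁
  obtain ⟨P₂, Q₂, hQ₂, he₂, hv₂⟩ := h₂
  have key : Q₂ * P₁ = Q₁ * P₂ := by
    apply aeval_hbar_injective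
    simp only [map_mul]
    linear_combination (Polynomial.aeval (hbar n) Q₁) * he₂
      - (Polynomial.aeval (hbar n) Q₂) * he₁
  have key2 := congrArg (Polynomial.eval c) key
  simp only [Polynomial.eval_mul] at key2
  rw [hv₁, hv₂, div_eq_div_iff hQ₁ hQ₂]
  linear_combination key2

lemma algC_nat (d : ℕ) :
    algebraMap (MvPolynomial (Fin n) ℚ) (Kf n) (MvPolynomial.C (d:ℚ)) = (d : Kf n) := by
  rw [show ((d:ℚ)) = (((d:ℕ):ℚ)) from rfl, map_natCast, map_natCast]

lemma lin_ne {i j j' : Fin n} (a b c : ℚ) (ha : a ≠ 0) (hj : j ≠ i) (hj' : j' ≠ i) :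
    algebraMap (MvPolynomial (Fin n) ℚ) (Kf n) (MvPolynomial.C a) * alpha n i
      + algebraMap (MvPolynomial (Fin n) ℚ) (Kf n) (MvPolynomial.C b) * alpha n j
      + algebraMap (MvPolynomial (Fin n) ℚ) (Kf n) (MvPolynomial.C c) * alpha n j' ≠ 0 := by
  intro h
  rw [alpha, alpha, alpha, ← map_mul, ← map_mul, ← map_mul, ← map_add, ← map_add,
    show (0 : Kf n) = algebraMap (MvPolynomial (Fin n) ℚ) (Kf n) 0 from (map_zero _).symm] at h
  have hp := IsFractionRing.injective (MvPolynomial (Fin n) ℚ) (Kf n) h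
  have hc := congrArg (MvPolynomial.coeff (Finsupp.single i 1)) hp
  simp only [MvPolynomial.coeff_add, MvPolynomial.coeff_C_mul, MvPolynomial.coeff_X',
    MvPolynomial.coeff_zero] at hc
  have h1 : ¬(Finsupp.single j (1:ℕ) = Finsupp.single i 1) :=
    fun he => hj ((Finsupp.single_left_inj one_ne_zero).1 he)
  have h2 : ¬(Finsupp.single j' (1:ℕ) = Finsupp.single i 1) :=
    fun he => hj' ((Finsupp.single_left_inj one_ne_zero).1 he)
  rw [if_neg h1, if_neg h2] at hc
  simp at hc
  exact ha hc

lemma alpha_sub_ne {i j : Fin n} (h : i ≠ j) : alpha n i - alpha n j ≠ 0 := by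
  have := lin_ne (n := n) (i := i) (j := j) (j' := j) 1 (-1) 0 one_ne_zero h.symm h.symm
  simpa [map_one, map_neg, sub_eq_add_neg] using this

lemma point_ne_zero {i j : Fin n} (h : i ≠ j) {d : ℕ} (hd : 1 ≤ d) :
    (alpha n i - alpha n j) / (d : Kf n) ≠ 0 :=
  div_ne_zero (alpha_sub_ne h) (Nat.cast_ne_zero.2 (by omega))

lemma keyB {i j j' : Fin n} (hj : j ≠ i) (hj' : j' ≠ i) {d d'' : ℕ}
    (hd : 1 ≤ d) (hd'' : 1 ≤ d'') :
    (alpha n i - alpha n j') / (d'' : Kf n) ≠ (alpha n j - alpha n i) / (d : Kf n) := by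
  intro h
  rw [div_eq_div_iff (Nat.cast_ne_zero.2 (by omega)) (Nat.cast_ne_zero.2 (by omega))] at h
  refine lin_ne (n := n) (i := i) (j := j) (j' := j') ((d:ℚ) + (d'':ℚ)) (-(d'':ℚ)) (-(d:ℚ))
    (by positivity) hj hj' ?_
  simp only [map_add, map_neg, algC_nat]
  linear_combination h

/-- a `C`-recursive `F` has (a) all `q`-coefficients of each `F(αᵢ,ħ,q)`
rational in `ħ`; (b) these coefficients regular at every `ħ = (αᵢ−α_j)/d`, `d ≥ 1`, `j ≠ i`;
and (c) `F` satisfies the closed recursion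
`F(αᵢ,ħ,q) = ∑_{d,|r|≤N_d} F_i^r(d) ħ^r q^d
  + ∑_{d≥1} ∑_{j≠i} C_i^j(d) q^d/(ħ−(α_j−αᵢ)/d) · F(α_j,(α_j−αᵢ)/d,q)`,
where `v i d j d'` denotes the value at `ħ = (α_j−αᵢ)/d` of the `q^{d'}`-coefficient of
`F(α_j,ħ,q)`. -/
theorem statement3 (n : ℕ) (hn : 1 ≤ n)
    (C : ℕ → Fin n → Fin n → Kf n)
    (F : Fin n → PowerSeries (Lf n))
    (hrec : CRecursive n C F) :
    (∀ (i : Fin n) (d : ℕ), IsRatH n (PowerSeries.coeff d (F i))) ∧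
    (∀ d : ℕ, 1 ≤ d → ∀ (d' : ℕ) (i j : Fin n), i ≠ j →
        RegAt n (PowerSeries.coeff d' (F i))
          ((alpha n i - alpha n j) / (d : Kf n))) ∧
    ∃ (N : ℕ → ℕ) (Fc : ℕ → Fin n → ℤ → Kf n) (v : Fin n → ℕ → Fin n → ℕ → Kf n),
      (∀ (i : Fin n) (d : ℕ) (j : Fin n) (d' : ℕ), 1 ≤ d → j ≠ i →
          RegEvalAt n (PowerSeries.coeff d' (F j))
            ((alpha n j - alpha n i) / (d : Kf n)) (v i d j d')) ∧
      (∀ (i : Fin n) (D : ℕ),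
        PowerSeries.coeff D (F i)
          = (∑ r ∈ Finset.Icc (-(N D : ℤ)) ((N D : ℤ)),
              algebraMap (Kf n) (Lf n) (Fc D i r) * hbar n ^ r)
            + ∑ d ∈ Finset.Icc 1 D, ∑ j ∈ Finset.univ.erase i,
                algebraMap (Kf n) (Lf n) (C d i j)
                  * (hbar n
                      - algebraMap (Kf n) (Lf n)
                          ((alpha n j - alpha n i) / (d : Kf n)))⁻¹
                  * algebraMap (Kf n) (Lf n) (v i d j (D - d))) := by
  have main : ∀ D : ℕ, (∀ i, IsRatH n (PowerSeries.coeff D (F i))) ∧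
      (∀ d : ℕ, 1 ≤ d → ∀ i j : Fin n, i ≠ j →
        RegAt n (PowerSeries.coeff D (F i)) ((alpha n i - alpha n j) / (d : Kf n))) := by
    intro D
    induction D using Nat.strong_induction_on with
    | _ D ih =>
      have hyp1 : ∀ d : ℕ, 1 ≤ d → d ≤ D → ∀ i : Fin n,
          IsRatH n (PowerSeries.coeff (D - d) (F i)) :=
        fun d hd1 hd2 i => (ih (D - d) (by omega)).1 i
      have hyp2 : ∀ d : ℕ, 1 ≤ d → d < D → ∀ i j : Fin n, i ≠ j →
          RegAt n (PowerSeries.coeff d (F i)) ((alpha n i - alpha n j) / (d : Kf n)) :=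
        fun d hd1 hd2 i j hij => (ih d hd2).2 d hd1 i j hij
      have key : ∀ i : Fin n, IsRatH n (PowerSeries.coeff D (F i)) ∧
          ∀ d'' : ℕ, 1 ≤ d'' → ∀ j : Fin n, i ≠ j →
            RegAt n (PowerSeries.coeff D (F i))
              ((alpha n i - alpha n j) / (d'' : Kf n)) := by
        intro i
        obtain ⟨w, hwreg, hLP⟩ := hrec D hyp1 hyp2 i
        set S : Lf n := ∑ d ∈ Finset.Icc 1 D, ∑ j ∈ Finset.univ.erase i,
          algebraMap (Kf n) (Lf n) (C d i j)
            * (hbar n - algebraMap (Kf n) (Lf n) ((alpha n j - alpha n i) / (d : Kf n)))⁻¹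
            * algebraMap (Kf n) (Lf n) (w d j) with hSdef
        have hx : PowerSeries.coeff D (F i)
            = (PowerSeries.coeff D (F i) - S) + S := by ring
        constructor
        · rw [hx]
          refine isRatH_add (isRatH_of_laurent hLP) (isRatH_sum _ _ fun d hd => ?_)
          exact isRatH_sum _ _ fun j hj => isRatH_term _ _ _
        · intro d'' hd'' j hij
          rw [hx]
          refine regAt_add (regAt_of_laurent hLP (point_ne_zero hij hd''))
            (regAt_sum _ _ fun d hd => regAt_sum _ _ fun j' hj' => ?_)
          exact ⟨_, regEvalAt_term _ _ _ _
            (keyB (Finset.mem_erase.1 hj').1 (Ne.symm hij) (Finset.mem_Icc.1 hd).1 hd'')⟩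
      exact ⟨fun i => (key i).1, fun d hd i j hij => (key i).2 d hd j hij⟩
  refine ⟨fun i d => (main d).1 i, fun d hd d' i j hij => (main d').2 d hd i j hij, ?_⟩
  classical
  obtain ⟨v, hv⟩ : ∃ v : Fin n → ℕ → Fin n → ℕ → Kf n,
      ∀ (i : Fin n) (d : ℕ) (j : Fin n) (d' : ℕ), 1 ≤ d → j ≠ i →
        RegEvalAt n (PowerSeries.coeff d' (F j))
          ((alpha n j - alpha n i) / (d : Kf n)) (v i d j d') := by
    refine ⟨fun i d j d' =>
      if h : 1 ≤ d ∧ j ≠ i then ((main d').2 d h.1 j i h.2).choose else 0, ?_⟩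
    intro i d j d' hd hji
    have h : 1 ≤ d ∧ j ≠ i := ⟨hd, hji⟩
    dsimp only
    rw [dif_pos h]
    exact ((main d').2 d h.1 j i h.2).choose_spec
  have hLd : ∀ (i : Fin n) (D : ℕ),
      (PowerSeries.coeff D (F i)
        - ∑ d ∈ Finset.Icc 1 D, ∑ j ∈ Finset.univ.erase i,
            algebraMap (Kf n) (Lf n) (C d i j)
              * (hbar n - algebraMap (Kf n) (Lf n)
                  ((alpha n j - alpha n i) / (d : Kf n)))⁻¹
              * algebraMap (Kf n) (Lf n) (v i d j (D - d))).support.Finite := by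
    intro i D
    obtain ⟨w, hwreg, hLP⟩ := hrec D (fun d hd1 hd2 i => (main (D - d)).1 i)
      (fun d hd1 hd2 i j hij => (main d).2 d hd1 i j hij) i
    have hws : (∑ d ∈ Finset.Icc 1 D, ∑ j ∈ Finset.univ.erase i,
        algebraMap (Kf n) (Lf n) (C d i j)
          * (hbar n - algebraMap (Kf n) (Lf n)
              ((alpha n j - alpha n i) / (d : Kf n)))⁻¹
          * algebraMap (Kf n) (Lf n) (w d j))
        = ∑ d ∈ Finset.Icc 1 D, ∑ j ∈ Finset.univ.erase i,
        algebraMap (Kf n) (Lf n) (C d i j)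
          * (hbar n - algebraMap (Kf n) (Lf n)
              ((alpha n j - alpha n i) / (d : Kf n)))⁻¹
          * algebraMap (Kf n) (Lf n) (v i d j (D - d)) :=
      Finset.sum_congr rfl fun d hd => Finset.sum_congr rfl fun j hj => by
        rw [regEvalAt_unique
          (hwreg d j (Finset.mem_Icc.1 hd).1 (Finset.mem_Icc.1 hd).2 (Finset.mem_erase.1 hj).1)
          (hv i d j (D - d) (Finset.mem_Icc.1 hd).1 (Finset.mem_erase.1 hj).1)]
    rw [hws] at hLP
    exact hLP
  choose Nf hNf using fun i D => laurent_bound _ (hLd i D)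
  refine ⟨fun D => Finset.univ.sup (fun i => Nf i D),
    fun D i r => (PowerSeries.coeff D (F i)
        - ∑ d ∈ Finset.Icc 1 D, ∑ j ∈ Finset.univ.erase i,
            algebraMap (Kf n) (Lf n) (C d i j)
              * (hbar n - algebraMap (Kf n) (Lf n)
                  ((alpha n j - alpha n i) / (d : Kf n)))⁻¹
              * algebraMap (Kf n) (Lf n) (v i d j (D - d))).coeff (-r),
    v, fun i d j d' hd hji => hv i d j d' hd hji, ?_⟩
  intro i D
  have hsub : (PowerSeries.coeff D (F i)
      - ∑ d ∈ Finset.Icc 1 D, ∑ j ∈ Finset.univ.erase i,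
          algebraMap (Kf n) (Lf n) (C d i j)
            * (hbar n - algebraMap (Kf n) (Lf n)
                ((alpha n j - alpha n i) / (d : Kf n)))⁻¹
            * algebraMap (Kf n) (Lf n) (v i d j (D - d))).support
      ⊆ Set.Icc (-((Finset.univ.sup (fun i => Nf i D) : ℕ) : ℤ))
          ((Finset.univ.sup (fun i => Nf i D) : ℕ) : ℤ) := by
    have hle : Nf i D ≤ Finset.univ.sup (fun i => Nf i D) :=
      Finset.le_sup (f := fun i => Nf i D) (Finset.mem_univ i)
    refine (hNf i D).trans ?_
    intro a ha
    simp only [Set.mem_Icc] at ha ⊢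
    omega
  have hrep := eq_sum_single _ _ hsub
  linear_combination hrep

end SQ
end
end

section
/- If s is an integer with 0 ≤ s and s + 1 < |a|, then ∑_{i=1}^{n} L_i(q)^{s+1−|a|} = ∑_{i=1}^{n} α_i^{s+1−|a|} in ℚ_α[[q]] (each L_i is invertible in ℚ_α[[q]] since its constant term α_i is nonzero); equivalently, the formal q-derivative of ∑_{i=1}^{n} L_i(q)^{s+1−|a|} vanishes. -/
/-!
Setting: `Kf n = ℚ_α = ℚ(α₁,…,αₙ)` is the field of rational functions in `n` variables over
`ℚ` (in which the `αᵢ` are pairwise distinct).  For a tuple `a : Fin l → ℤ` of nonzero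
integers with `|a| = ∑|a_k| ≤ n` and `a^a = ∏ a_k^{|a_k|}`, the power series
`L_i ∈ ℚ_α[[q]]` is characterized by having constant term `αᵢ` and satisfying
`∏ₖ(L_i − αₖ) = q·a^a·L_i^{|a|}`.
-/

noncomputable section

namespace SQ

/-- `|a| = ∑ |a_k|`. -/
def absSum (l : ℕ) (a : Fin l → ℤ) : ℕ := ∑ k : Fin l, (a k).natAbs

/-- `a^a = ∏ a_k^{|a_k|}`, as an element of `ℚ_α`. -/
def aPow (n l : ℕ) (a : Fin l → ℤ) : Kf n := ((∏ k : Fin l, a k ^ (a k).natAbs : ℤ) : Kf n)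

/-- The defining property of `L_i ∈ ℚ_α[[q]]`: constant term `αᵢ` and
`∏ₖ(L − αₖ) = q·a^a·L^{|a|}`. -/
def IsLSeries (n l : ℕ) (a : Fin l → ℤ) (i : Fin n) (L : PowerSeries (Kf n)) : Prop :=
  PowerSeries.constantCoeff (R := Kf n) L = alpha n i ∧
    ∏ k : Fin n, (L - PowerSeries.C (R := Kf n) (alpha n k))
      = PowerSeries.X * PowerSeries.C (R := Kf n) (aPow n l a) * L ^ absSum l a

section Aux

open Polynomial Finset

variable {F : Type*} [Field F]

/-- A monic polynomial of degree `n` with `n` distinct roots is the product of `X - root`. -/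
theorem aux_prod_roots {n : ℕ} (P : Polynomial F) (hP : P.Monic) (hdeg : P.natDegree = n)
    (v : Fin n → F) (hv : Function.Injective v) (hroot : ∀ i, P.IsRoot (v i)) :
    P = ∏ i : Fin n, (Polynomial.X - Polynomial.C (v i)) := by
  classical
  have hPne : P ≠ 0 := hP.ne_zero
  have hnodup : (Finset.univ.val.map v).Nodup := Multiset.Nodup.map hv Finset.univ.nodup
  have hle : (Finset.univ.val.map v) ≤ P.roots := by
    rw [Multiset.le_iff_count]
    intro x
    by_cases hx : x ∈ Finset.univ.val.map v
    · have h1 : (Finset.univ.val.map v).count x = 1 := Multiset.count_eq_one_of_mem hnodup hx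
      rw [h1, Polynomial.count_roots]
      obtain ⟨i, _, rfl⟩ := Multiset.mem_map.mp hx
      exact (Polynomial.rootMultiplicity_pos hPne).mpr (hroot i)
    · rw [Multiset.count_eq_zero_of_notMem hx]
      exact Nat.zero_le _
  have hcard : Multiset.card P.roots = n := by
    have h1 : Multiset.card (Finset.univ.val.map v) = n := by simp
    have h2 : Multiset.card P.roots ≤ n := hdeg ▸ P.card_roots'
    have := Multiset.card_le_card hle
    omega
  have heq : P.roots = Finset.univ.val.map v :=
    (Multiset.eq_of_le_of_card_le hle (by rw [hcard]; simp)).symm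
  have := Polynomial.prod_multiset_X_sub_C_of_monic_of_roots_card_eq hP (by rw [hcard, hdeg])
  rw [heq] at this
  rw [← this, Multiset.map_map]
  rfl

theorem aux_esymm_coeff {n : ℕ} (v : Fin n → F) {j : ℕ} (hj : j ≤ n) :
    (∏ i : Fin n, (Polynomial.X - Polynomial.C (v i))).coeff (n - j)
      = (-1) ^ j * ∑ t ∈ Finset.powersetCard j Finset.univ, ∏ i ∈ t, v i := by
  have h := Finset.prod_X_add_C_coeff (Finset.univ : Finset (Fin n)) (fun i => -v i)
      (k := n - j) (by simp)
  simp only [Finset.card_univ, Fintype.card_fin] at h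
  rw [Nat.sub_sub_self hj] at h
  calc (∏ i : Fin n, (Polynomial.X - Polynomial.C (v i))).coeff (n - j)
      = (∏ i : Fin n, (Polynomial.X + Polynomial.C (-v i))).coeff (n - j) := by
        simp [sub_eq_add_neg]
    _ = ∑ t ∈ Finset.powersetCard j Finset.univ, ∏ i ∈ t, (-v i) := h
    _ = (-1) ^ j * ∑ t ∈ Finset.powersetCard j Finset.univ, ∏ i ∈ t, v i := by
        rw [Finset.mul_sum]
        apply Finset.sum_congr rfl
        intro t ht
        have hc : t.card = j := (Finset.mem_powersetCard.mp ht).2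
        have h2 : ∀ i ∈ t, -v i = -1 * v i := by intro i _; ring
        rw [← hc, Finset.prod_congr rfl h2, Finset.prod_mul_distrib, Finset.prod_const]

theorem aux_newton {n : ℕ} (v w : Fin n → F) (m : ℕ)
    (he : ∀ j, 1 ≤ j → j ≤ m - 1 →
      (∑ t ∈ Finset.powersetCard j Finset.univ, ∏ i ∈ t, v i)
        = ∑ t ∈ Finset.powersetCard j Finset.univ, ∏ i ∈ t, w i) :
    ∀ k, k ≤ m - 1 → (∑ i : Fin n, v i ^ k) = ∑ i : Fin n, w i ^ k := by
  intro k
  induction k using Nat.strong_induction_on with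
  | _ k ih =>
    intro hk
    rcases Nat.eq_zero_or_pos k with rfl | hk0
    · simp
    have haev : ∀ (u : Fin n → F) j,
        MvPolynomial.aeval u (MvPolynomial.esymm (Fin n) F j)
          = ∑ t ∈ Finset.powersetCard j Finset.univ, ∏ i ∈ t, u i := by
      intro u j; simp [MvPolynomial.esymm]
    have hps : ∀ (u : Fin n → F) j,
        MvPolynomial.aeval u (MvPolynomial.psum (Fin n) F j) = ∑ i : Fin n, u i ^ j := by
      intro u j; simp [MvPolynomial.psum]
    have h1 := congrArg (MvPolynomial.aeval v)
      (MvPolynomial.psum_eq_mul_esymm_sub_sum (Fin n) F k hk0)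
    have h2 := congrArg (MvPolynomial.aeval w)
      (MvPolynomial.psum_eq_mul_esymm_sub_sum (Fin n) F k hk0)
    simp only [map_sub, map_mul, map_pow, map_neg, map_one, map_natCast, map_sum,
      hps, haev] at h1 h2
    rw [h1, h2, he k hk0 hk]
    congr 1
    apply Finset.sum_congr rfl
    intro p hp
    simp only [Finset.mem_filter, Finset.HasAntidiagonal.mem_antidiagonal, Set.mem_Ioo] at hp
    obtain ⟨hpk, hp1, hp2⟩ := hp
    rw [he p.1 hp1 (by omega), ih p.2 (by omega) (by omega)]

end Aux

set_option maxHeartbeats 1000000 in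
set_option synthInstance.maxHeartbeats 1000000 in
/-- if `0 ≤ s` and `s + 1 < |a|`, then
`∑ᵢ L_i(q)^{s+1−|a|} = ∑ᵢ αᵢ^{s+1−|a|}` in `ℚ_α[[q]]` (the negative powers being
`L_i^{s+1−|a|} = (L_i⁻¹)^{|a|−s−1}`, each `L_i` being invertible since its constant term is
`αᵢ ≠ 0`). -/
theorem statement15 (n l : ℕ) (hn : 1 ≤ n) (a : Fin l → ℤ) (ha : ∀ k, a k ≠ 0)
    (hm : absSum l a ≤ n)
    (L : Fin n → PowerSeries (Kf n)) (hL : ∀ i : Fin n, IsLSeries n l a i (L i))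
    (s : ℕ) (hs : s + 1 < absSum l a) :
    ∑ i : Fin n, ((L i)⁻¹) ^ (absSum l a - (s + 1))
      = PowerSeries.C (R := Kf n) (∑ i : Fin n, ((alpha n i)⁻¹) ^ (absSum l a - (s + 1))) := by
  classical
  set m := absSum l a with hmdef
  have hm2 : 2 ≤ m := by omega
  set r : ℕ := m - (s + 1) with hrdef
  have hr1 : 1 ≤ r := by omega
  have hrm : r ≤ m - 1 := by omega
  -- basic facts about the αᵢ
  have hinjQ : Function.Injective (algebraMap (MvPolynomial (Fin n) ℚ) (Kf n)) :=
    IsFractionRing.injective _ _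
  have halpha_ne : ∀ i : Fin n, alpha n i ≠ 0 := by
    intro i h
    have h0 : (MvPolynomial.X i : MvPolynomial (Fin n) ℚ) = 0 :=
      hinjQ (by rw [map_zero]; exact h)
    exact MvPolynomial.X_ne_zero i h0
  have halpha_inj : Function.Injective (alpha n) := by
    intro i j h
    exact MvPolynomial.X_injective (hinjQ h)
  -- the inverse series M i
  have hLc : ∀ i, PowerSeries.constantCoeff (R := Kf n) (L i) = alpha n i := fun i => (hL i).1
  have hLne : ∀ i, PowerSeries.constantCoeff (R := Kf n) (L i) ≠ 0 := by
    intro i; rw [hLc i]; exact halpha_ne i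
  set M : Fin n → PowerSeries (Kf n) := fun i => (L i)⁻¹ with hMdef
  have hLM : ∀ i, L i * M i = 1 := fun i => PowerSeries.mul_inv_cancel _ (hLne i)
  have hMc : ∀ i, PowerSeries.constantCoeff (R := Kf n) (M i) = (alpha n i)⁻¹ := by
    intro i
    show PowerSeries.constantCoeff (R := Kf n) (L i)⁻¹ = (alpha n i)⁻¹
    rw [PowerSeries.constantCoeff_inv, hLc i]
  -- the equation satisfied by M i
  have hMeq : ∀ i, ∏ k : Fin n, (1 - PowerSeries.C (R := Kf n) (alpha n k) * M i)
      = PowerSeries.X * PowerSeries.C (R := Kf n) (aPow n l a) * M i ^ (n - m) := by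
    intro i
    have e1 : ∏ k : Fin n, (1 - PowerSeries.C (R := Kf n) (alpha n k) * M i)
        = M i ^ n * ∏ k : Fin n, (L i - PowerSeries.C (R := Kf n) (alpha n k)) := by
      have hthis := Finset.pow_card_mul_prod (s := (Finset.univ : Finset (Fin n)))
        (f := fun k => L i - PowerSeries.C (R := Kf n) (alpha n k)) (b := M i)
      simp only [Finset.card_univ, Fintype.card_fin] at hthis
      rw [hthis]
      apply Finset.prod_congr rfl
      intro k _
      rw [mul_sub, mul_comm (M i) (L i), hLM i, mul_comm (M i)]
    have h4 : M i ^ m * L i ^ m = 1 := by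
      rw [← mul_pow, mul_comm (M i), hLM i, one_pow]
    have e2 : M i ^ n * (PowerSeries.X * PowerSeries.C (R := Kf n) (aPow n l a) * L i ^ m)
        = PowerSeries.X * PowerSeries.C (R := Kf n) (aPow n l a) * M i ^ (n - m) := by
      have h3 : M i ^ n = M i ^ (n - m) * M i ^ m := by rw [← pow_add]; congr 1; omega
      calc M i ^ n * (PowerSeries.X * PowerSeries.C (R := Kf n) (aPow n l a) * L i ^ m)
          = PowerSeries.X * PowerSeries.C (R := Kf n) (aPow n l a)
              * (M i ^ (n - m) * (M i ^ m * L i ^ m)) := by rw [h3]; ring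
        _ = PowerSeries.X * PowerSeries.C (R := Kf n) (aPow n l a) * M i ^ (n - m) := by
              rw [h4, mul_one]
    rw [e1, (hL i).2, e2]
  -- move to the fraction field of the power series ring
  set FF := FractionRing (PowerSeries (Kf n)) with hFFdef
  set φ : PowerSeries (Kf n) →+* FF := algebraMap (PowerSeries (Kf n)) FF with hφdef
  have hφ : Function.Injective φ := IsFractionRing.injective _ _
  set b : Fin n → FF := fun k => φ (PowerSeries.C (R := Kf n) (alpha n k)) with hbdef
  have hbne : ∀ k, b k ≠ 0 := by
    intro k h
    apply halpha_ne k
    have h0 : PowerSeries.C (R := Kf n) (alpha n k) = 0 := hφ (by rw [map_zero]; exact h)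
    simpa using congrArg (PowerSeries.constantCoeff (R := Kf n)) h0
  set β : Fin n → FF := fun k => (b k)⁻¹ with hβdef
  set N : Fin n → FF := fun i => φ (M i) with hNdef
  set QA : FF := φ (PowerSeries.X * PowerSeries.C (R := Kf n) (aPow n l a)) with hQdef
  have hprodne : (∏ k : Fin n, (-(b k))) ≠ 0 :=
    Finset.prod_ne_zero_iff.mpr (fun k _ => neg_ne_zero.mpr (hbne k))
  set d : FF := (∏ k : Fin n, (-(b k)))⁻¹ * QA with hddef
  have hNeq : ∀ i, ∏ k : Fin n, (N i - β k) = d * N i ^ (n - m) := by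
    intro i
    have h1 : ∏ k : Fin n, (1 - b k * N i) = QA * N i ^ (n - m) := by
      have h := congrArg φ (hMeq i)
      rw [map_prod] at h
      simp only [map_sub, map_mul, map_pow, map_one] at h
      simp only [hbdef, hNdef, hQdef, map_mul]
      exact h
    have h2 : ∀ k : Fin n, (1 : FF) - b k * N i = (-(b k)) * (N i - β k) := by
      intro k
      have hbb : b k * β k = 1 := mul_inv_cancel₀ (hbne k)
      calc (1 : FF) - b k * N i = b k * β k - b k * N i := by rw [hbb]
        _ = (-(b k)) * (N i - β k) := by ring
    rw [Finset.prod_congr rfl (fun k _ => h2 k), Finset.prod_mul_distrib] at h1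
    rw [hddef, mul_assoc, eq_inv_mul_iff_mul_eq₀ hprodne]
    exact h1
  -- the polynomial P1
  set A0 : Polynomial FF := ∏ k : Fin n, (Polynomial.X - Polynomial.C (β k)) with hA0def
  set P1 : Polynomial FF := A0 - Polynomial.C d * Polynomial.X ^ (n - m) with hP1def
  have hA0monic : A0.Monic :=
    Polynomial.monic_prod_of_monic _ _ (fun k _ => Polynomial.monic_X_sub_C (β k))
  have hA0deg : A0.natDegree = n := by
    rw [hA0def, Polynomial.natDegree_prod _ _ (fun k _ => Polynomial.X_sub_C_ne_zero (β k))]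
    simp [Polynomial.natDegree_X_sub_C]
  have hdlt : (Polynomial.C d * Polynomial.X ^ (n - m)).degree < A0.degree := by
    apply lt_of_le_of_lt (Polynomial.degree_C_mul_X_pow_le _ _)
    rw [Polynomial.degree_eq_natDegree hA0monic.ne_zero, hA0deg]
    exact_mod_cast Nat.sub_lt (by omega) (by omega)
  have hP1monic : P1.Monic := by
    rw [hP1def, sub_eq_add_neg]
    exact hA0monic.add_of_left (by rw [Polynomial.degree_neg]; exact hdlt)
  have hP1deg : P1.natDegree = n := by
    rw [hP1def]
    exact (Polynomial.natDegree_eq_of_degree_eq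
      (Polynomial.degree_sub_eq_left_of_degree_lt hdlt)).trans hA0deg
  have hroot : ∀ i, P1.IsRoot (N i) := by
    intro i
    have h := hNeq i
    simp only [hP1def, hA0def, Polynomial.IsRoot, Polynomial.eval_sub, Polynomial.eval_mul,
      Polynomial.eval_pow, Polynomial.eval_prod, Polynomial.eval_X, Polynomial.eval_C]
    rw [h]; ring
  have hNinj : Function.Injective N := by
    intro i j h
    have hMij : M i = M j := hφ h
    have hc := congrArg (PowerSeries.constantCoeff (R := Kf n)) hMij
    rw [hMc i, hMc j] at hc
    exact halpha_inj (inv_injective hc)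
  have hP1eq := aux_prod_roots P1 hP1monic hP1deg N hNinj hroot
  -- equality of elementary symmetric functions
  have hesymm : ∀ j, 1 ≤ j → j ≤ m - 1 →
      (∑ t ∈ Finset.powersetCard j Finset.univ, ∏ i ∈ t, N i)
        = ∑ t ∈ Finset.powersetCard j Finset.univ, ∏ i ∈ t, β i := by
    intro j hj1 hjm
    have hjn : j ≤ n := by omega
    have hco : (∏ i : Fin n, (Polynomial.X - Polynomial.C (N i))).coeff (n - j)
        = (∏ k : Fin n, (Polynomial.X - Polynomial.C (β k))).coeff (n - j) := by
      rw [← hA0def, ← hP1eq, hP1def, Polynomial.coeff_sub, Polynomial.coeff_C_mul,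
        Polynomial.coeff_X_pow, if_neg (by omega), mul_zero, sub_zero]
    rw [aux_esymm_coeff N hjn, aux_esymm_coeff β hjn] at hco
    exact mul_left_cancel₀ (pow_ne_zero j (neg_ne_zero.mpr (one_ne_zero))) hco
  have hkey := aux_newton N β m hesymm r hrm
  -- translate back
  have hβ : ∀ i, β i = φ (PowerSeries.C (R := Kf n) ((alpha n i)⁻¹)) := by
    intro i
    have hmul : b i * φ (PowerSeries.C (R := Kf n) ((alpha n i)⁻¹)) = 1 := by
      rw [hbdef]
      simp only []
      rw [← map_mul, ← map_mul, mul_inv_cancel₀ (halpha_ne i), map_one, map_one]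
    show (b i)⁻¹ = _
    exact inv_eq_of_mul_eq_one_right hmul
  have hfin : φ (∑ i : Fin n, M i ^ r)
      = φ (PowerSeries.C (R := Kf n) (∑ i : Fin n, (alpha n i)⁻¹ ^ r)) := by
    have h1 : φ (∑ i : Fin n, M i ^ r) = ∑ i : Fin n, N i ^ r := by
      rw [map_sum]
      exact Finset.sum_congr rfl fun i _ => by rw [map_pow]
    have h2 : φ (PowerSeries.C (R := Kf n) (∑ i : Fin n, (alpha n i)⁻¹ ^ r))
        = ∑ i : Fin n, β i ^ r := by
      rw [map_sum, map_sum]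
      exact Finset.sum_congr rfl fun i _ => by rw [map_pow, map_pow, ← hβ i]
    rw [h1, h2, hkey]
  exact hφ hfin

end SQ
end
end
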